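/- Assume ñ > 2. Let a > 0 and let u : [a, ∞) → ℝ be twice continuously differentiable with u(a) = 0, u'(a) = α > 0, u(r) > 0 for all r > a, and suppose u satisfies the Pucci differential inequalities at every r > a. Then u(r) → 0 as r → ∞. -/

import Mathlib

open Real Set

/-- `P⁺[u](r)`: the Pucci maximal operator `𝓜⁺_{λ,Λ}` evaluated on the Hessian of the
radial function `v(x) = u(|x|)`, expressed through `u'` and `u''`. -/
noncomputable def Pp (n : ℕ) (lam Lam : ℝ) (u' u'' : ℝ → ℝ) (r : ℝ) : ℝ :=
  Lam * max (u'' r) 0 + lam * min (u'' r) 0 +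
    ((n : ℝ) - 1) * (Lam * max (u' r / r) 0 + lam * min (u' r / r) 0)

/-- `P⁻[u](r)`: the Pucci minimal operator `𝓜⁻_{λ,Λ}` evaluated on the Hessian of the
radial function `v(x) = u(|x|)`. -/
noncomputable def Pm (n : ℕ) (lam Lam : ℝ) (u' u'' : ℝ → ℝ) (r : ℝ) : ℝ :=
  lam * max (u'' r) 0 + Lam * min (u'' r) 0 +
    ((n : ℝ) - 1) * (lam * max (u' r / r) 0 + Lam * min (u' r / r) 0)

/-- `u` satisfies the Pucci differential inequalities at `r`:
`−P⁺[u](r) ≤ |u(r)|^{p−1}u(r) ≤ −P⁻[u](r)`. -/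
def PucciIneq (n : ℕ) (lam Lam p : ℝ) (u u' u'' : ℝ → ℝ) (r : ℝ) : Prop :=
  -Pp n lam Lam u' u'' r ≤ |u r| ^ (p - 1) * u r ∧
    |u r| ^ (p - 1) * u r ≤ -Pm n lam Lam u' u'' r

private lemma mono_aux {f f' : ℝ → ℝ} {s : ℝ}
    (hd : ∀ r ∈ Ici s, HasDerivAt f (f' r) r)
    (h0 : ∀ r ∈ Ioi s, 0 ≤ f' r) : MonotoneOn f (Ici s) := by
  apply monotoneOn_of_deriv_nonneg (convex_Ici s)
  · exact fun r hr => (hd r hr).continuousAt.continuousWithinAt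
  · intro r hr
    rw [interior_Ici] at hr
    exact (hd r (mem_Ici.2 (le_of_lt hr))).differentiableAt.differentiableWithinAt
  · intro r hr
    rw [interior_Ici] at hr
    rw [(hd r (mem_Ici.2 (le_of_lt hr))).deriv]
    exact h0 r hr

set_option maxHeartbeats 1000000 in
/-- Corollary 2.3 (paper): if the maximal positive radial arc is global (`ρ = ∞`),
then `u(r) → 0` as `r → ∞`. -/
theorem tendsto_zero_of_global_positive_arc
    (n : ℕ) (hn : 2 ≤ n) (lam Lam p ntil : ℝ) (hlam : 0 < lam) (hlL : lam ≤ Lam) (hp : 1 < p)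
    (hnt : ntil = Lam / lam * ((n : ℝ) - 1) + 1) (hnt2 : 2 < ntil)
    (a α : ℝ) (ha : 0 < a) (hα : 0 < α)
    (u u' u'' : ℝ → ℝ)
    (hu : ∀ r : ℝ, a ≤ r → HasDerivAt u (u' r) r)
    (hu' : ∀ r : ℝ, a ≤ r → HasDerivAt u' (u'' r) r)
    (hu'' : ContinuousOn u'' (Ici a))
    (hua : u a = 0) (hu'a : u' a = α)
    (hpos : ∀ r : ℝ, a < r → 0 < u r)
    (hPucci : ∀ r : ℝ, a < r → PucciIneq n lam Lam p u u' u'' r) :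
    Filter.Tendsto u Filter.atTop (nhds 0) := by
  have hLam : 0 < Lam := hlam.trans_le hlL
  have hn2 : (2:ℝ) ≤ (n:ℝ) := by exact_mod_cast hn
  have hrel : lam * (ntil - 1) = Lam * ((n : ℝ) - 1) := by
    rw [hnt]; field_simp; ring
  have hp1 : (0:ℝ) ≤ p - 1 := by linarith
  have hUpos : ∀ r, a < r → 0 < |u r| ^ (p - 1) * u r := by
    intro r hr
    have h := hpos r hr
    exact mul_pos (Real.rpow_pos_of_pos (abs_pos.2 h.ne') _) h
  have hUmono : ∀ x y : ℝ, 0 < x → x ≤ y → |x| ^ (p - 1) * x ≤ |y| ^ (p - 1) * y := by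
    intro x y hx hxy
    have hy : 0 < y := hx.trans_le hxy
    rw [abs_of_pos hx, abs_of_pos hy]
    exact mul_le_mul (Real.rpow_le_rpow hx.le hxy hp1) hxy hx.le (Real.rpow_nonneg hy.le _)
  -- Lemma A : where u' ≥ 0 we have Lam * u'' ≤ -U
  have lemA : ∀ r, a < r → 0 ≤ u' r → Lam * u'' r ≤ -(|u r| ^ (p - 1) * u r) := by
    intro r har h0
    have hr0 : 0 < r := ha.trans har
    have hUp := hUpos r har
    have hP := (hPucci r har).2
    unfold Pm at hP
    have hdiv : 0 ≤ u' r / r := div_nonneg h0 hr0.le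
    rw [max_eq_left hdiv, min_eq_right hdiv] at hP
    have h1 : 0 ≤ lam * (u' r / r) := mul_nonneg hlam.le hdiv
    have hterm : 0 ≤ ((n : ℝ) - 1) * (lam * (u' r / r) + Lam * 0) := by
      apply mul_nonneg (by linarith)
      simp only [mul_zero, add_zero]; exact h1
    rcases le_total 0 (u'' r) with h | h
    · rw [max_eq_left h, min_eq_right h] at hP
      linarith [mul_nonneg hlam.le h]
    · rw [max_eq_right h, min_eq_left h] at hP
      linarith
  -- Lemma B : where u' ≤ 0 we have r*U ≤ Lam * ((ntil-1)(-u') - r u'')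
  have lemB : ∀ r, a < r → u' r ≤ 0 →
      r * (|u r| ^ (p - 1) * u r) ≤ Lam * ((ntil - 1) * (-(u' r)) - r * u'' r) := by
    intro r har h0
    have hr0 : 0 < r := ha.trans har
    have hUp := hUpos r har
    have hP := (hPucci r har).2
    unfold Pm at hP
    have hdiv : u' r / r ≤ 0 := div_nonpos_of_nonpos_of_nonneg h0 hr0.le
    rw [max_eq_right hdiv, min_eq_left hdiv] at hP
    have hs : u' r / r * r = u' r := div_mul_cancel₀ _ hr0.ne'
    set s : ℝ := u' r / r with hsdef
    rw [← hs] at h0 ⊢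
    have h3 : lam * (ntil - 1) * (s * r) = Lam * ((n : ℝ) - 1) * (s * r) := by rw [hrel]
    rcases le_total 0 (u'' r) with h | h
    · rw [max_eq_left h, min_eq_right h] at hP
      have h2 := mul_le_mul_of_nonneg_left hP hr0.le
      have h1 : r * (|u r| ^ (p - 1) * u r) ≤
          lam * ((ntil - 1) * (-(s * r)) - r * u'' r) := by linarith [h2, h3]
      have hrU : 0 < r * (|u r| ^ (p - 1) * u r) := mul_pos hr0 hUp
      have hB : 0 < (ntil - 1) * (-(s * r)) - r * u'' r := by
        by_contra hc
        push_neg at hc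
        have : lam * ((ntil - 1) * (-(s * r)) - r * u'' r) ≤ 0 :=
          mul_nonpos_iff.2 (Or.inl ⟨hlam.le, hc⟩)
        linarith
      linarith [h1, mul_le_mul_of_nonneg_right hlL hB.le]
    · rw [max_eq_right h, min_eq_left h] at hP
      have h2 := mul_le_mul_of_nonneg_left hP hr0.le
      have h4 : 0 ≤ (ntil - 1) * (-(s * r)) * (Lam - lam) := by
        apply mul_nonneg (mul_nonneg (by linarith) (by linarith)) (by linarith)
      linarith [h2, h3, h4]
  -- Step 1: u' vanishes somewhere
  have exR1 : ∃ r1, a < r1 ∧ u' r1 = 0 := by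
    by_contra hcon
    push_neg at hcon
    have hpos' : ∀ r, a < r → 0 < u' r := by
      intro r har
      rcases lt_or_gt_of_ne (hcon r har) with h | h
      · exfalso
        have hcont : ContinuousOn u' (Icc a r) := fun x hx =>
          (hu' x hx.1).continuousAt.continuousWithinAt
        have h0mem : (0:ℝ) ∈ Icc (u' r) (u' a) := ⟨h.le, by rw [hu'a]; exact hα.le⟩
        obtain ⟨c, hc, hc0⟩ := intermediate_value_Icc' har.le hcont h0mem
        have hca : a < c := by
          rcases eq_or_lt_of_le hc.1 with h' | h'
          · exfalso; rw [← h', hu'a] at hc0; linarith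
          · exact h'
        exact hcon c hca hc0
      · exact h
    -- u is monotone on [a+1, ∞)
    have hmonu : MonotoneOn u (Ici (a + 1)) :=
      mono_aux (fun r hr => hu r (by simp at hr; linarith))
        (fun r hr => (hpos' r (by simp at hr; linarith)).le)
    have hb : a < a + 1 := by linarith
    set K1 : ℝ := |u (a + 1)| ^ (p - 1) * u (a + 1) with hK1def
    have hK1 : 0 < K1 := hUpos _ hb
    have hU1 : ∀ r, a + 1 ≤ r → K1 ≤ |u r| ^ (p - 1) * u r := by
      intro r hr
      exact hUmono _ _ (hpos _ hb) (hmonu (self_mem_Ici) hr hr)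
    -- -(u') - (K1/Lam) r is monotone on [a+1,∞)
    have hmonf : MonotoneOn (fun r => -(u' r) - K1 / Lam * r) (Ici (a + 1)) := by
      apply mono_aux (f' := fun r => -(u'' r) - K1 / Lam)
      · intro r hr
        have h := ((hu' r (by simp at hr; linarith)).neg).sub
          ((hasDerivAt_id r).const_mul (K1 / Lam))
        simp only [mul_one] at h
        exact h
      · intro r hr
        simp only [mem_Ioi] at hr
        have hA := lemA r (by linarith) (hpos' r (by linarith)).le
        have hU := hU1 r hr.le
        have : K1 / Lam ≤ -(u'' r) := by
          rw [div_le_iff₀ hLam]; linarith [hA, hU]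
        linarith
    set R : ℝ := a + 1 + Lam / K1 * (u' (a + 1) + 1) with hRdef
    have hu'b : 0 < u' (a + 1) := hpos' _ hb
    have hRb : a + 1 ≤ R := by
      have : 0 < Lam / K1 * (u' (a + 1) + 1) := by positivity
      simp only [hRdef]; linarith
    have hfR : -(u' (a + 1)) - K1 / Lam * (a + 1) ≤ -(u' R) - K1 / Lam * R :=
      hmonf self_mem_Ici hRb hRb
    have hcan : K1 / Lam * (Lam / K1 * (u' (a + 1) + 1)) = u' (a + 1) + 1 := by
      field_simp
    have hRR : K1 / Lam * R = K1 / Lam * (a + 1) + (u' (a + 1) + 1) := by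
      rw [hRdef, mul_add, hcan]
    have : u' R ≤ -1 := by linarith [hfR, hRR]
    linarith [hpos' R (by linarith)]
  obtain ⟨r1, hr1a, hr1z⟩ := exR1
  have hr10 : 0 < r1 := ha.trans hr1a
  -- Step 2: u' ≤ 0 on [r1, ∞)
  have hC : ∀ r, r1 ≤ r → u' r ≤ 0 := by
    by_contra hcon
    push_neg at hcon
    obtain ⟨r2, hr2, hr2pos⟩ := hcon
    have hr12 : r1 < r2 := by
      rcases eq_or_lt_of_le hr2 with h | h
      · exfalso; rw [← h, hr1z] at hr2pos; linarith
      · exact h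
    set S : Set ℝ := Icc r1 r2 ∩ u' ⁻¹' (Iic 0) with hSdef
    have hScl : IsClosed S := by
      apply ContinuousOn.preimage_isClosed_of_isClosed _ isClosed_Icc isClosed_Iic
      exact fun x hx => (hu' x (by linarith [hx.1])).continuousAt.continuousWithinAt
    have hSne : S.Nonempty := ⟨r1, ⟨le_refl _, hr12.le⟩, by simp [hr1z]⟩
    have hSbdd : BddAbove S := ⟨r2, fun x hx => hx.1.2⟩
    set t : ℝ := sSup S with htdef
    have htS : t ∈ S := hScl.csSup_mem hSne hSbdd
    have ht1 : r1 ≤ t := htS.1.1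
    have ht2' : t ≤ r2 := htS.1.2
    have htle : u' t ≤ 0 := htS.2
    have htne : t ≠ r2 := by
      intro h; rw [h] at htle; linarith
    have ht2 : t < r2 := lt_of_le_of_ne ht2' htne
    have hta : a < t := lt_of_lt_of_le hr1a ht1
    have hgt : ∀ s, t < s → s ≤ r2 → 0 < u' s := by
      intro s hs1 hs2
      by_contra h
      push_neg at h
      have : s ∈ S := ⟨⟨le_trans ht1 hs1.le, hs2⟩, h⟩
      have := le_csSup hSbdd this
      linarith
    have htz : u' t = 0 := by
      rcases lt_or_eq_of_le htle with h | h
      · exfalso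
        have hcont : Filter.Tendsto u' (nhds t) (nhds (u' t)) :=
          (hu' t hta.le).continuousAt
        have hev : ∀ᶠ s in nhds t, u' s < 0 := hcont.eventually_lt_const h
        have hev2 : ∀ᶠ s in nhdsWithin t (Ioi t), u' s < 0 :=
          hev.filter_mono nhdsWithin_le_nhds
        have hmem : Ioo t r2 ∈ nhdsWithin t (Ioi t) :=
          Ioo_mem_nhdsGT_of_mem ⟨le_refl t, ht2⟩
        obtain ⟨s, hs1, hs2⟩ := (hev2.and (Filter.eventually_of_mem hmem (fun x hx => hx))).exists
        exact absurd hs1 (not_lt.2 (hgt s hs2.1 hs2.2.le).le)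
      · exact h
    -- u'' t < 0, slope argument
    have hA := lemA t hta (le_of_eq htz.symm)
    have hU := hUpos t hta
    have hu''neg : u'' t < 0 := by
      by_contra hc
      push_neg at hc
      have : 0 ≤ Lam * u'' t := mul_nonneg hLam.le hc
      linarith
    have hslope := hasDerivAt_iff_tendsto_slope.1 (hu' t hta.le)
    have hev : ∀ᶠ s in nhdsWithin t {t}ᶜ, slope u' t s < 0 :=
      hslope.eventually_lt_const hu''neg
    have hmono : nhdsWithin t (Ioi t) ≤ nhdsWithin t {t}ᶜ :=
      nhdsWithin_mono t (fun x hx => ne_of_gt hx)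
    have hev2 : ∀ᶠ s in nhdsWithin t (Ioi t), slope u' t s < 0 := hev.filter_mono hmono
    have hmem : Ioo t r2 ∈ nhdsWithin t (Ioi t) := Ioo_mem_nhdsGT_of_mem ⟨le_refl t, ht2⟩
    obtain ⟨s, hs1, hs2⟩ := (hev2.and (Filter.eventually_of_mem hmem (fun x hx => hx))).exists
    rw [slope_def_field, htz, sub_zero] at hs1
    have hst : 0 < s - t := by linarith [hs2.1]
    have : u' s < 0 := by
      have := (div_neg_iff).1 hs1
      rcases this with ⟨h1, h2⟩ | ⟨h1, h2⟩
      · linarith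
      · exact h1
    exact absurd this (not_lt.2 (hgt s hs2.1 hs2.2.le).le)
  -- u is antitone on [r1, ∞)
  have hanti : ∀ x y, r1 ≤ x → x ≤ y → u y ≤ u x := by
    have hm := mono_aux (f := fun r => -(u r)) (f' := fun r => -(u' r))
      (fun r hr => (hu r (le_trans hr1a.le hr)).neg)
      (fun r hr => by
        simp only [mem_Ioi] at hr
        show (0:ℝ) ≤ -(u' r)
        linarith [hC r hr.le])
    intro x y hx hxy
    have := hm (show x ∈ Ici r1 from hx) (show y ∈ Ici r1 from hx.trans hxy) hxy
    simpa using this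
  -- Final step
  rw [Metric.tendsto_atTop]
  intro ε hε
  have hex : ∃ s, r1 ≤ s ∧ u s < ε := by
    by_contra hcon
    push_neg at hcon
    -- u ≥ ε on [r1, ∞); derive contradiction
    set K : ℝ := |ε| ^ (p - 1) * ε with hKdef
    have hK : 0 < K := mul_pos (Real.rpow_pos_of_pos (abs_pos.2 hε.ne') _) hε
    have hUK : ∀ r, r1 ≤ r → K ≤ |u r| ^ (p - 1) * u r :=
      fun r hr => hUmono _ _ hε (hcon r hr)
    have hnt0 : (0:ℝ) < ntil := by linarith
    set c0 : ℝ := K / (Lam * ntil) with hc0def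
    have hc0 : 0 < c0 := by positivity
    have hc0n : c0 * ntil = K / Lam := by
      rw [hc0def]; field_simp
    -- G is monotone on [r1, ∞)
    have hGmono : MonotoneOn
        (fun r => r ^ (ntil - 1) * (-(u' r)) - c0 * r ^ ntil) (Ici r1) := by
      apply mono_aux (f' := fun r => ((ntil - 1) * r ^ (ntil - 2) * (-(u' r)) +
        r ^ (ntil - 1) * (-(u'' r))) - c0 * (ntil * r ^ (ntil - 1)))
      · intro r hr
        simp only [mem_Ici] at hr
        have hr0 : 0 < r := lt_of_lt_of_le hr10 hr
        have h1 := Real.hasDerivAt_rpow_const (x := r) (p := ntil - 1) (Or.inl hr0.ne')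
        rw [show ntil - 1 - 1 = ntil - 2 by ring] at h1
        have h2 := (hu' r (le_trans hr1a.le hr)).neg
        have h3 := Real.hasDerivAt_rpow_const (x := r) (p := ntil) (Or.inl hr0.ne')
        exact (h1.mul h2).sub (h3.const_mul c0)
      · intro r hr
        simp only [mem_Ioi] at hr
        have hr0 : 0 < r := hr10.trans hr
        have hra : a < r := hr1a.trans hr
        have hB := lemB r hra (hC r hr.le)
        have hKU := hUK r hr.le
        have hx : r ^ (ntil - 1) = r ^ (ntil - 2) * r := by
          have h := Real.rpow_add_one hr0.ne' (ntil - 2)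
          rwa [show ntil - 2 + 1 = ntil - 1 by ring] at h
        have hdivB : K / Lam * r ≤ (ntil - 1) * (-(u' r)) - r * u'' r := by
          rw [div_mul_eq_mul_div, div_le_iff₀ hLam]
          linarith [hB, mul_le_mul_of_nonneg_left hKU hr0.le]
        have hrp : (0:ℝ) ≤ r ^ (ntil - 2) := Real.rpow_nonneg hr0.le _
        have h5 := mul_le_mul_of_nonneg_left hdivB hrp
        have h6 : c0 * (ntil * (r ^ (ntil - 2) * r)) =
            K / Lam * (r ^ (ntil - 2) * r) := by rw [← hc0n]; ring
        rw [hx]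
        linarith [h5, h6]
    set C0 : ℝ := r1 ^ (ntil - 1) * (-(u' r1)) - c0 * r1 ^ ntil with hC0def
    have hX1 : 0 < r1 ^ (ntil - 1) := Real.rpow_pos_of_pos hr10 _
    set D : ℝ := |C0| / r1 ^ (ntil - 1) with hDdef
    have hD0 : 0 ≤ D := div_nonneg (abs_nonneg _) hX1.le
    have hDX1 : D * r1 ^ (ntil - 1) = |C0| := div_mul_cancel₀ _ hX1.ne'
    -- linear lower bound for -u'
    have hlin : ∀ r, r1 ≤ r → c0 * r - D ≤ -(u' r) := by
      intro r hr
      have hr0 : 0 < r := lt_of_lt_of_le hr10 hr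
      have hGr : C0 ≤ r ^ (ntil - 1) * (-(u' r)) - c0 * r ^ ntil :=
        hGmono self_mem_Ici hr hr
      have hxn : r ^ ntil = r ^ (ntil - 1) * r := by
        have h := Real.rpow_add_one hr0.ne' (ntil - 1)
        rwa [show ntil - 1 + 1 = ntil by ring] at h
      have hXr : r1 ^ (ntil - 1) ≤ r ^ (ntil - 1) :=
        Real.rpow_le_rpow hr10.le hr (by linarith)
      have hXr0 : 0 < r ^ (ntil - 1) := Real.rpow_pos_of_pos hr0 _
      have habs : -|C0| ≤ C0 := neg_abs_le _
      have hxn' : c0 * r ^ ntil = c0 * (r ^ (ntil - 1) * r) := by rw [hxn]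
      have hfin : (c0 * r - D) * r ^ (ntil - 1) ≤ (-(u' r)) * r ^ (ntil - 1) := by
        linarith [hGr, hxn', hDX1, habs, mul_le_mul_of_nonneg_left hXr hD0]
      exact le_of_mul_le_mul_right hfin hXr0
    set r3 : ℝ := max r1 (2 * D / c0) with hr3def
    have hr31 : r1 ≤ r3 := le_max_left _ _
    have hr30 : 0 < r3 := hr10.trans_le hr31
    have hr3a : a < r3 := hr1a.trans_le hr31
    have hu'bd : ∀ r, r3 ≤ r → u' r + c0 / 2 * r ≤ 0 := by
      intro r hr
      have h1 := hlin r (hr31.trans hr)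
      have h2 : 2 * D / c0 ≤ r := le_trans (le_max_right _ _) hr
      rw [div_le_iff₀ hc0] at h2
      linarith
    -- H is antitone on [r3, ∞)
    have hHmono : MonotoneOn (fun r => -(u r) - c0 / 4 * (r * r)) (Ici r3) := by
      apply mono_aux (f' := fun r => -(u' r) - c0 / 4 * (r + r))
      · intro r hr
        simp only [mem_Ici] at hr
        have h := ((hu r (le_trans hr3a.le hr)).neg).sub
          (((hasDerivAt_id r).mul (hasDerivAt_id r)).const_mul (c0 / 4))
        have he : -(u' r) - c0 / 4 * (1 * r + r * 1) = -(u' r) - c0 / 4 * (r + r) := by ring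
        rw [← he]
        exact h
      · intro r hr
        simp only [mem_Ioi] at hr
        have := hu'bd r hr.le
        nlinarith
    set δ : ℝ := 2 * u r3 / (c0 * r3) + 1 with hδdef
    have hur3 : 0 < u r3 := hpos r3 hr3a
    have hδ0 : 0 < δ := by positivity
    set r4 : ℝ := r3 + δ with hr4def
    have hr43 : r3 ≤ r4 := by simp only [hr4def]; linarith
    have hHr : -(u r3) - c0 / 4 * (r3 * r3) ≤ -(u r4) - c0 / 4 * (r4 * r4) :=
      hHmono self_mem_Ici hr43 hr43
    have hδeq : c0 * (r3 * δ) = 2 * u r3 + c0 * r3 := by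
      rw [hδdef]; field_simp
    have hr4sq : c0 * (r4 * r4) = c0 * (r3 * r3) + 2 * (c0 * (r3 * δ)) + c0 * (δ * δ) := by
      rw [hr4def]; ring
    have hur4 : 0 < u r4 := hpos r4 (by simp only [hr4def]; linarith)
    have hc0δ : 0 ≤ c0 * (δ * δ) := by positivity
    linarith [hHr, hr4sq, hδeq, hc0δ, hur4, mul_pos hc0 hr30]
  obtain ⟨s, hs1, hs2⟩ := hex
  refine ⟨s, fun r hr => ?_⟩
  have hur : u r ≤ u s := hanti s r hs1 hr
  have hra : a < r := lt_of_lt_of_le (hr1a.trans_le hs1) hr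
  have : 0 < u r := hpos r hra
  rw [Real.dist_eq, sub_zero, abs_of_pos this]
  linarith
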